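/- Affine n-space k^n over an uncountable algebraically closed field k (for finite n) is not a countable union of proper algebraic subsets: given countably many nonzero polynomials f_i ∈ k[z_1,...,z_n], there is a common non-vanishing point. -/

import Mathlib

open MvPolynomial

/-- Affine `n`-space over an uncountable algebraically closed field is not a countable
union of proper algebraic subsets: countably many nonzero polynomials in
`k[z_1, ..., z_n]` have a common non-vanishing point. -/
theorem exists_common_nonvanishing_point_fin {k : Type*} [Field k] [IsAlgClosed k]
    [Uncountable k] {n : ℕ} (f : ℕ → MvPolynomial (Fin n) k) (hf : ∀ i, f i ≠ 0) :
    ∃ a : Fin n → k, ∀ i, eval a (f i) ≠ 0 := by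
  induction n with
  | zero =>
    refine ⟨Fin.elim0, fun i hzero => hf i ?_⟩
    have hinj : Function.Injective (aeval (R := k) Fin.elim0 :
        MvPolynomial (Fin 0) k →ₐ[k] k) :=
      aeval_injective_iff_of_isEmpty.mpr fun x y h => by simpa using h
    have : (aeval (Fin.elim0 : Fin 0 → k)) (f i) = 0 := by
      rw [aeval_def, ← eval_map]; simpa using hzero
    simpa using hinj (by simpa using this)
  | succ n ih =>
    set F : ℕ → Polynomial (MvPolynomial (Fin n) k) := fun i => finSuccEquiv k n (f i) with hF
    have hFne : ∀ i, F i ≠ 0 := fun i h => hf i (by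
      have := congrArg (finSuccEquiv k n).symm h
      rw [hF] at this
      simpa using this)
    obtain ⟨a, ha⟩ := ih (fun i => (F i).leadingCoeff)
      (fun i => Polynomial.leadingCoeff_ne_zero.mpr (hFne i))
    set P : ℕ → Polynomial k := fun i => Polynomial.map (eval a) (F i) with hP
    have hPne : ∀ i, P i ≠ 0 := by
      intro i h
      apply ha i
      have h2 : eval a ((F i).leadingCoeff) = (P i).coeff ((F i).natDegree) :=
        (Polynomial.coeff_map _ _).symm
      rw [h2, h, Polynomial.coeff_zero]
    have hcount : (⋃ i, {x : k | (P i).IsRoot x}).Countable :=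
      Set.countable_iUnion fun i => (Polynomial.finite_setOf_isRoot (hPne i)).countable
    obtain ⟨y, hy⟩ : ∃ y : k, y ∉ ⋃ i, {x : k | (P i).IsRoot x} := by
      by_contra h
      push_neg at h
      exact (Set.not_countable_univ (α := k))
        (hcount.mono (Set.univ_subset_iff.mpr (Set.eq_univ_of_forall h))) |>.elim
      
    refine ⟨Fin.cons y a, fun i hzero => ?_⟩
    rw [eval_eq_eval_mv_eval'] at hzero
    exact hy (Set.mem_iUnion.mpr ⟨i, hzero⟩)
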